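/- Universal property of the Dowling lift: let P = (R, G) be a partial field and P' = (R', G') a partial field admitting a strong partial-field homomorphism φ : P → P'. Then there exists a unique strong partial-field homomorphism ψ : DP → P' with ψ ∘ i = φ, where i : P → DP is the canonical inclusion sending p to [X_p]. -/

import Mathlib

/-- The set of elements of a partial field `(R, G)`: the zero element together
with the elements of the subgroup `G` of units. -/
def PFElems (R : Type) [CommRing R] (G : Subgroup Rˣ) : Set R :=
  {x | x = 0 ∨ ∃ u ∈ G, (u : R) = x}

/-- A partial-field homomorphism between partial fields `(R₁, G₁)` and `(R₂, G₂)`. -/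
def IsPFHom (R₁ : Type) [CommRing R₁] (G₁ : Subgroup R₁ˣ)
    (R₂ : Type) [CommRing R₂] (G₂ : Subgroup R₂ˣ) (φ : R₁ → R₂) : Prop :=
  (∀ p ∈ PFElems R₁ G₁, φ p ∈ PFElems R₂ G₂) ∧
  φ 1 = 1 ∧
  (∀ p ∈ PFElems R₁ G₁, ∀ q ∈ PFElems R₁ G₁, φ (p * q) = φ p * φ q) ∧
  (∀ p ∈ PFElems R₁ G₁, ∀ q ∈ PFElems R₁ G₁, p + q ∈ PFElems R₁ G₁ →
    φ p + φ q = φ (p + q))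


/-- The fundamental elements of a partial field `(R, G)`: elements `p` such
that both `p` and `1 - p` are elements of the partial field. -/
def PFFund (R : Type) [CommRing R] (G : Subgroup Rˣ) : Set R :=
  {p | p ∈ PFElems R G ∧ (1 - p) ∈ PFElems R G}
noncomputable section

open MvPolynomial

/-- The index set `Q̄_P` of the indeterminates `Y_p`, one for each fundamental
element `p ∉ {0, 1}` of the partial field (fundamental elements other than
`0` are units lying in `G`). -/
def DIdx (R : Type) [CommRing R] (G : Subgroup Rˣ) : Type :=
  {u : Rˣ // u ∈ G ∧ ((u : R) ∈ PFFund R G) ∧ (u : R) ≠ 1}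

/-- The ring `D_P = ℤ[Ḡ][Q̄_P]`: polynomials in the indeterminates `Y_p`
over the group ring `ℤ[Ḡ]` of (a copy of) `G`. -/
def DBase (R : Type) [CommRing R] (G : Subgroup Rˣ) : Type :=
  MvPolynomial (DIdx R G) (MonoidAlgebra ℤ G)

instance (R : Type) [CommRing R] (G : Subgroup Rˣ) : CommRing (DBase R G) :=
  inferInstanceAs (CommRing (MvPolynomial (DIdx R G) (MonoidAlgebra ℤ G)))

/-- The element `X_g` of `D_P`, for `g ∈ G`: the group-ring basis element
corresponding to `g`, viewed as a constant polynomial. -/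
def Xbar (R : Type) [CommRing R] (G : Subgroup Rˣ) (g : G) : DBase R G :=
  MvPolynomial.C (MonoidAlgebra.of ℤ G g)

/-- The ideal `J_P` generated by `X_1 - 1` and `Y_p (1 - X_p) - 1` for
`p ∈ F(P) \ {0, 1}`. -/
def DIdeal (R : Type) [CommRing R] (G : Subgroup Rˣ) : Ideal (DBase R G) :=
  Ideal.span
    ({Xbar R G 1 - 1} ∪
     {f : DBase R G | ∃ q : DIdx R G,
        f = (X q * (1 - MvPolynomial.C (MonoidAlgebra.of ℤ G ⟨q.1, q.2.1⟩)) - 1 :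
          MvPolynomial (DIdx R G) (MonoidAlgebra ℤ G))})

/-- The ring `D_P / J_P` of the Dowling lift `DP`. -/
def DRing (R : Type) [CommRing R] (G : Subgroup Rˣ) : Type :=
  DBase R G ⧸ DIdeal R G

instance (R : Type) [CommRing R] (G : Subgroup Rˣ) : CommRing (DRing R G) :=
  Ideal.Quotient.commRing (DIdeal R G)

/-- The quotient map `D_P → D_P / J_P`. -/
def dMk (R : Type) [CommRing R] (G : Subgroup Rˣ) : DBase R G →+* DRing R G :=
  Ideal.Quotient.mk (DIdeal R G)

/-- The distinguished group `⟨{-1} ∪ Ḡ ∪ Q̄_P⟩` of the Dowling lift. -/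
def DGroup (R : Type) [CommRing R] (G : Subgroup Rˣ) : Subgroup (DRing R G)ˣ :=
  Subgroup.closure {u : (DRing R G)ˣ |
    ((u : DRing R G) = -1) ∨
    (∃ g : G, (u : DRing R G) = dMk R G (Xbar R G g)) ∨
    ∃ q : DIdx R G, (u : DRing R G) = dMk R G (X q : DBase R G)}

section Aux

variable {R : Type} [CommRing R] {G : Subgroup Rˣ}

/-- For `q ∈ Q̄_P`, there is a unit `w ∈ G` with `↑w = 1 - q`. -/
lemma fundCompl (q : DIdx R G) : ∃ w : Rˣ, w ∈ G ∧ (w : R) = 1 - (q.1 : R) := by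
  rcases q.2.2.1.2 with h0 | ⟨u, hu, hu2⟩
  · exact absurd (by linear_combination -h0) q.2.2.2
  · exact ⟨u, hu, hu2⟩

/-- A chosen unit `w ∈ G` with `↑w = 1 - q`. -/
noncomputable def complUnit (q : DIdx R G) : Rˣ := (fundCompl q).choose

lemma complUnit_mem (q : DIdx R G) : complUnit q ∈ G := (fundCompl q).choose_spec.1

lemma complUnit_spec (q : DIdx R G) : ((complUnit q : Rˣ) : R) = 1 - (q.1 : R) :=
  (fundCompl q).choose_spec.2

variable {R' : Type} [CommRing R'] (φ : R →+* R')

/-- The ring homomorphism `ℤ[Ḡ] → R'` induced by `φ`. -/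
noncomputable def baseHom : MonoidAlgebra ℤ G →+* R' :=
  MonoidAlgebra.liftNCRingHom (Int.castRingHom R')
    ((Units.coeHom R').comp ((Units.map (φ : R →* R')).comp G.subtype))
    (fun _ _ => Commute.all _ _)

lemma baseHom_of (g : G) : baseHom φ (MonoidAlgebra.of ℤ G g) = φ ((g : Rˣ) : R) := by
  simp [baseHom, MonoidAlgebra.liftNCRingHom, MonoidAlgebra.of_apply,
    MonoidAlgebra.liftNC_single]

/-- The lift `D_P → R'`. -/
noncomputable def psi0 : DBase R G →+* R' :=
  MvPolynomial.eval₂Hom (baseHom φ)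
    (fun q => (((Units.map (φ : R →* R') (complUnit q))⁻¹ : R'ˣ) : R'))

lemma psi0_C_of (g : G) :
    psi0 φ (MvPolynomial.C (MonoidAlgebra.of ℤ G g)) = φ ((g : Rˣ) : R) := by
  have h := MvPolynomial.eval₂_C (baseHom φ)
    (fun q : DIdx R G => (((Units.map (φ : R →* R') (complUnit q))⁻¹ : R'ˣ) : R'))
    (MonoidAlgebra.of ℤ G g)
  exact h.trans (baseHom_of φ g)

lemma psi0_X (q : DIdx R G) :
    psi0 φ (MvPolynomial.X q) = (((Units.map (φ : R →* R') (complUnit q))⁻¹ : R'ˣ) : R') := by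
  have h := @MvPolynomial.eval₂_X (MonoidAlgebra ℤ G) R' (DIdx R G) _ _ (baseHom φ)
    (fun q : DIdx R G => (((Units.map (φ : R →* R') (complUnit q))⁻¹ : R'ˣ) : R')) q
  exact h

lemma unit_complement (q : DIdx R G) :
    ((Units.map (φ : R →* R') (complUnit q) : R'ˣ) : R') = 1 - φ ((q.1 : Rˣ) : R) := by
  rw [Units.coe_map]
  show φ ((complUnit q : Rˣ) : R) = _
  rw [complUnit_spec, map_sub, map_one]

lemma ideal_le_ker : DIdeal R G ≤ RingHom.ker (psi0 φ) := by
  rw [DIdeal, Ideal.span_le]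
  rintro f (rfl | ⟨q, rfl⟩)
  · have h1 : psi0 φ (Xbar R G 1 - 1) = 0 := by
      rw [map_sub, map_one, Xbar]
      rw [psi0_C_of]
      simp
    exact h1
  · show psi0 φ _ = 0
    erw [map_sub, map_one, map_mul, map_sub, map_one,
      psi0_X]
    rw [show (MvPolynomial.C (MonoidAlgebra.of ℤ G ⟨q.1, q.2.1⟩) :
        MvPolynomial (DIdx R G) (MonoidAlgebra ℤ G)) = Xbar R G ⟨q.1, q.2.1⟩ from rfl]
    rw [show psi0 φ (Xbar R G ⟨q.1, q.2.1⟩) = φ ((q.1 : Rˣ) : R) from psi0_C_of φ _]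
    rw [← unit_complement φ q]
    rw [← Units.val_mul, inv_mul_cancel, Units.val_one, sub_self]

/-- The induced homomorphism `DP → P'`. -/
noncomputable def psiHom : DRing R G →+* R' :=
  Ideal.Quotient.lift (DIdeal R G) (psi0 φ) (fun _ ha => ideal_le_ker φ ha)

lemma psiHom_Xbar (g : G) : psiHom φ (dMk R G (Xbar R G g)) = φ ((g : Rˣ) : R) := by
  exact psi0_C_of φ g

lemma psiHom_X (q : DIdx R G) :
    psiHom φ (dMk R G (MvPolynomial.X q)) =
      (((Units.map (φ : R →* R') (complUnit q))⁻¹ : R'ˣ) : R') := by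
  exact psi0_X φ q

/-- The key relation in `DRing`. -/
lemma dRing_rel (q : DIdx R G) :
    dMk R G (MvPolynomial.X q) * (1 - dMk R G (Xbar R G ⟨q.1, q.2.1⟩)) = 1 := by
  have hmem : (MvPolynomial.X q *
      (1 - MvPolynomial.C (MonoidAlgebra.of ℤ G ⟨q.1, q.2.1⟩)) - 1 :
      MvPolynomial (DIdx R G) (MonoidAlgebra ℤ G)) ∈ DIdeal R G :=
    Ideal.subset_span (Or.inr ⟨q, rfl⟩)
  have h0 : Ideal.Quotient.mk (DIdeal R G) (MvPolynomial.X q *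
      (1 - MvPolynomial.C (MonoidAlgebra.of ℤ G ⟨q.1, q.2.1⟩)) - 1) = 0 :=
    Ideal.Quotient.eq_zero_iff_mem.mpr hmem
  have h1 : dMk R G (MvPolynomial.X q *
      (1 - MvPolynomial.C (MonoidAlgebra.of ℤ G ⟨q.1, q.2.1⟩)) - 1) = 0 := h0
  erw [map_sub, map_mul, map_sub, map_one, sub_eq_zero] at h1
  exact h1

end Aux

/-- Universal property of the Dowling lift: if `P = (R, G)` and `P' = (R', G')`
are partial fields and `φ : P → P'` is a strong partial-field homomorphism
(a ring homomorphism with `φ(G) ⊆ G'`), then there is a unique strong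
partial-field homomorphism `ψ : DP → P'` with `ψ ∘ i = φ`, where
`i : P → DP` is the canonical inclusion sending `g ∈ G` to `[X_g]`. -/
theorem stmt15 (R : Type) [CommRing R] (G : Subgroup Rˣ) (hG : (-1 : Rˣ) ∈ G)
    (R' : Type) [CommRing R'] (G' : Subgroup R'ˣ) (hG' : (-1 : R'ˣ) ∈ G')
    (φ : R →+* R') (hφ : ∀ u : G, ∃ v ∈ G', φ ((u : Rˣ) : R) = ((v : R'ˣ) : R')) :
    ∃! ψ : DRing R G →+* R',
      (∀ u ∈ DGroup R G, ∃ v ∈ G', ψ ((u : (DRing R G)ˣ) : DRing R G) = ((v : R'ˣ) : R')) ∧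
      ∀ g : G, ψ (dMk R G (Xbar R G g)) = φ ((g : Rˣ) : R) := by
  classical
  refine ⟨psiHom φ, ⟨?_, fun g => psiHom_Xbar φ g⟩, ?_⟩
  · -- maps DGroup into G'
    have key : DGroup R G ≤ Subgroup.comap (Units.map ((psiHom φ : DRing R G →+* R') :
        DRing R G →* R')) G' := by
      rw [DGroup, Subgroup.closure_le]
      rintro u (hu | ⟨g, hg⟩ | ⟨q, hq⟩)
      · -- u = -1
        have : Units.map ((psiHom φ : DRing R G →+* R') : DRing R G →* R') u = -1 := by
          apply Units.ext
          rw [Units.coe_map]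
          show psiHom φ (u : DRing R G) = _
          rw [hu, map_neg, map_one, Units.val_neg, Units.val_one]
        rw [SetLike.mem_coe, Subgroup.mem_comap, this]
        exact hG'
      · -- u = X_g
        obtain ⟨v, hv, hv2⟩ := hφ g
        have : Units.map ((psiHom φ : DRing R G →+* R') : DRing R G →* R') u = v := by
          apply Units.ext
          rw [Units.coe_map]
          show psiHom φ (u : DRing R G) = _
          rw [hg, psiHom_Xbar, hv2]
        rw [SetLike.mem_coe, Subgroup.mem_comap, this]
        exact hv
      · -- u = Y_q
        obtain ⟨v, hv, hv2⟩ := hφ ⟨complUnit q, complUnit_mem q⟩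
        have hw : Units.map (φ : R →* R') (complUnit q) = v := by
          apply Units.ext
          rw [Units.coe_map]
          exact hv2
        have : Units.map ((psiHom φ : DRing R G →+* R') : DRing R G →* R') u = v⁻¹ := by
          apply Units.ext
          rw [Units.coe_map]
          show psiHom φ (u : DRing R G) = _
          rw [hq, psiHom_X, hw]
        rw [SetLike.mem_coe, Subgroup.mem_comap, this]
        exact inv_mem hv
    intro u hu
    refine ⟨Units.map ((psiHom φ : DRing R G →+* R') : DRing R G →* R') u, key hu, ?_⟩
    rw [Units.coe_map]
    rfl
  · -- uniqueness
    rintro ψ' ⟨_, h2⟩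
    apply Ideal.Quotient.ringHom_ext
    apply MvPolynomial.ringHom_ext
    · intro r
      have hext : (ψ'.comp (Ideal.Quotient.mk (DIdeal R G))).comp
            (MvPolynomial.C : MonoidAlgebra ℤ G →+* DBase R G) =
          ((psiHom φ).comp (Ideal.Quotient.mk (DIdeal R G))).comp
            (MvPolynomial.C : MonoidAlgebra ℤ G →+* DBase R G) := by
        apply MonoidAlgebra.ringHom_ext
        · intro b
          rw [show (MonoidAlgebra.single (1 : G) b : MonoidAlgebra ℤ G) = (b : MonoidAlgebra ℤ G)
            from (MonoidAlgebra.intCast_def b).symm]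
          simp only [RingHom.comp_apply, map_intCast]
        · intro g
          show ψ' (dMk R G (Xbar R G g)) = psiHom φ (dMk R G (Xbar R G g))
          rw [h2 g, psiHom_Xbar]
      exact congrFun (congrArg (fun f => f.toFun) hext) r
    · intro q
      have hrel := dRing_rel (R := R) (G := G) q
      have e1 : ψ' (dMk R G (MvPolynomial.X q)) *
          (1 - φ ((q.1 : Rˣ) : R)) = 1 := by
        have := congrArg ψ' hrel
        rw [map_mul, map_sub, map_one] at this
        rwa [h2 ⟨q.1, q.2.1⟩] at this
      have e2 : psiHom φ (dMk R G (MvPolynomial.X q)) *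
          (1 - φ ((q.1 : Rˣ) : R)) = 1 := by
        have := congrArg (psiHom φ) hrel
        rw [map_mul, map_sub, map_one] at this
        rwa [psiHom_Xbar φ ⟨q.1, q.2.1⟩] at this
      show ψ' (dMk R G (MvPolynomial.X q)) = psiHom φ (dMk R G (MvPolynomial.X q))
      calc ψ' (dMk R G (MvPolynomial.X q))
          = ψ' (dMk R G (MvPolynomial.X q)) *
            (psiHom φ (dMk R G (MvPolynomial.X q)) * (1 - φ ((q.1 : Rˣ) : R))) := by
            rw [e2, mul_one]
        _ = psiHom φ (dMk R G (MvPolynomial.X q)) *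
            (ψ' (dMk R G (MvPolynomial.X q)) * (1 - φ ((q.1 : Rˣ) : R))) := by ring
        _ = psiHom φ (dMk R G (MvPolynomial.X q)) := by rw [e1, mul_one]
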